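/- Fix integers r < n and a partition λ ⊆ (n-r)^r. For each i ∈ {1,...,r}, define an (i)-strip of an SSYT of shape λ (entries in {1,...,r}) to be a set of n-r boxes all filled with entry i, no two in the same column, such that whenever one box lies in a column strictly to the left of another, it does not lie in a strictly higher row. Let m(λ) be the number of parts of λ equal to n-r, and for 0 ≤ j ≤ m(λ) let λ^j be the partition of length r-j obtained by removing j parts of size n-r. Then the number of SSYTs of shape λ with entries in {1,...,r} containing no (i)-strip for any i equals Σ_{j=0}^{m(λ)} (-1)^j · C(r,j) · |SSYT_{r-j}(λ^j)|, where |SSYT_{r'}(μ)| is the number of SSYTs of shape μ with entries in {1,...,r'}. -/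

import Mathlib

def IsPartition (r : ℕ) (μ : ℕ → ℕ) : Prop :=
  (∀ i j, i ≤ j → μ j ≤ μ i) ∧ ∀ i, r ≤ i → μ i = 0

def ZeroOutside (μ : ℕ → ℕ) (T : ℕ → ℕ → ℕ) : Prop :=
  ∀ i j, ¬ j < μ i → T i j = 0

/-- A semistandard filling of the Young diagram of `μ` (cells `(i,j)` with `j < μ i`)
with entries in `{1,…,r}`: weakly increasing along rows, strictly increasing down columns. -/
def IsSSYT (μ : ℕ → ℕ) (r : ℕ) (T : ℕ → ℕ → ℕ) : Prop :=
  (∀ i j, j < μ i → 1 ≤ T i j ∧ T i j ≤ r) ∧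
  (∀ i j k, j ≤ k → k < μ i → T i j ≤ T i k) ∧
  (∀ i j, j < μ (i + 1) → T i j < T (i + 1) j)

/-- the `v`-weight: number of boxes of `μ` filled with entry `v`. -/
noncomputable def wgt (μ : ℕ → ℕ) (T : ℕ → ℕ → ℕ) (v : ℕ) : ℕ :=
  {p : ℕ × ℕ | p.2 < μ p.1 ∧ T p.1 p.2 = v}.ncard

/-- A `(v)`-strip of width `w`: one box in each of the `w` columns, all filled with `v`,
in weakly rising (left-to-right) configuration; `f j` is the row of the box in column `j`. -/
def HasIStrip (μ : ℕ → ℕ) (w : ℕ) (T : ℕ → ℕ → ℕ) (v : ℕ) : Prop :=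
  ∃ f : ℕ → ℕ, (∀ j k, j ≤ k → k < w → f k ≤ f j) ∧
    ∀ j, j < w → j < μ (f j) ∧ T (f j) j = v

/-- `(f, m)` is a `(v,v+1)`-strip of width `w`: one box per column, entries `v` in the
first `m` columns and `v+1` thereafter, weakly rising left-to-right. -/
def IsIIStrip (μ : ℕ → ℕ) (w : ℕ) (T : ℕ → ℕ → ℕ) (v : ℕ) (f : ℕ → ℕ) (m : ℕ) : Prop :=
  m ≤ w ∧ (∀ j k, j ≤ k → k < w → f k ≤ f j) ∧ (∀ j, j < w → j < μ (f j)) ∧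
  (∀ j, j < m → T (f j) j = v) ∧ (∀ j, m ≤ j → j < w → T (f j) j = v + 1)

def HasIIStrip (μ : ℕ → ℕ) (w : ℕ) (T : ℕ → ℕ → ℕ) (v : ℕ) : Prop :=
  ∃ f m, IsIIStrip μ w T v f m

/-- 1-strip-less: no `(i)`-strip for `i ∈ {1,…,r}` and no `(i,i+1)`-strip for
`i ∈ {1,…,r-1}`. -/
def OneStripLess (μ : ℕ → ℕ) (w : ℕ) (r : ℕ) (T : ℕ → ℕ → ℕ) : Prop :=
  (∀ v, 1 ≤ v → v ≤ r → ¬ HasIStrip μ w T v) ∧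
  (∀ v, 1 ≤ v → v ≤ r - 1 → ¬ HasIIStrip μ w T v)

/-- Number of SSYTs of shape `μ` with entries in `{1,…,r}`. -/
noncomputable def ssytCount (r : ℕ) (μ : ℕ → ℕ) : ℕ :=
  {T : ℕ → ℕ → ℕ | IsSSYT μ r T ∧ ZeroOutside μ T}.ncard

/-- `μ` with its first `j` parts removed. -/
def shiftPart (μ : ℕ → ℕ) (j : ℕ) : ℕ → ℕ := fun i => μ (i + j)

/-- A standard Young tableau of shape `μ` with entries `1,…,N`. -/
def IsSYT (μ : ℕ → ℕ) (N : ℕ) (T : ℕ → ℕ → ℕ) : Prop :=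
  (∀ i j, j < μ i → 1 ≤ T i j ∧ T i j ≤ N) ∧
  (∀ i j i' j', j < μ i → j' < μ i' → T i j = T i' j' → (i, j) = (i', j')) ∧
  (∀ i j, j + 1 < μ i → T i j < T i (j + 1)) ∧
  (∀ i j, j < μ (i + 1) → T i j < T (i + 1) j)

/-- `k` is a descent of the SYT `T`: the entry `k+1` appears in a strictly lower row. -/
def IsDescent (μ : ℕ → ℕ) (T : ℕ → ℕ → ℕ) (k : ℕ) : Prop :=
  ∃ i j i' j', j < μ i ∧ j' < μ i' ∧ T i j = k ∧ T i' j' = k + 1 ∧ i < i'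

section StripAuxSection
open Finset

namespace StripAux

/-- `k`-th smallest element of a finset of naturals (0 out of range). -/
def nth (A : Finset ℕ) (k : ℕ) : ℕ := (A.sort (· ≤ ·)).getD k 0

lemma nth_eq (A : Finset ℕ) {k : ℕ} (hk : k < A.card) :
    nth A k = (A.sort (· ≤ ·))[k]'(by rwa [Finset.length_sort]) := by
  rw [nth, List.getD_eq_getElem]

lemma nth_mem {A : Finset ℕ} {k : ℕ} (hk : k < A.card) : nth A k ∈ A := by
  rw [nth_eq A hk]
  exact (Finset.mem_sort _).1 (List.getElem_mem _)

lemma nth_lt_nth {A : Finset ℕ} {a b : ℕ} (hab : a < b) (hb : b < A.card) :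
    nth A a < nth A b := by
  rw [nth_eq A (hab.trans hb), nth_eq A hb]
  exact List.Pairwise.rel_get_of_lt (Finset.sortedLT_sort A).pairwise (by simpa using hab)

lemma nth_le_nth {A : Finset ℕ} {a b : ℕ} (hab : a ≤ b) (hb : b < A.card) :
    nth A a ≤ nth A b := by
  rcases eq_or_lt_of_le hab with rfl | h
  · exact le_rfl
  · exact (nth_lt_nth h hb).le

lemma exists_nth {A : Finset ℕ} {x : ℕ} (hx : x ∈ A) : ∃ k, k < A.card ∧ nth A k = x := by
  have : x ∈ A.sort (· ≤ ·) := (Finset.mem_sort _).2 hx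
  obtain ⟨i, hi, h⟩ := List.mem_iff_getElem.1 this
  exact ⟨i, by simpa using hi, by rw [nth_eq A (by simpa using hi)]; exact h⟩

lemma nth_injOn {A : Finset ℕ} {a b : ℕ} (ha : a < A.card) (hb : b < A.card)
    (h : nth A a = nth A b) : a = b := by
  rcases lt_trichotomy a b with hl | he | hl
  · exact absurd h (nth_lt_nth hl hb).ne
  · exact he
  · exact absurd h.symm (nth_lt_nth hl ha).ne

lemma image_nth (A : Finset ℕ) : (range A.card).image (nth A) = A := by
  apply Finset.eq_of_subset_of_card_le
  · intro y hy
    obtain ⟨a, ha, rfl⟩ := Finset.mem_image.1 hy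
    exact nth_mem (mem_range.1 ha)
  · rw [Finset.card_image_of_injOn, card_range]
    intro a ha b hb
    exact nth_injOn (mem_range.1 ha) (mem_range.1 hb)

lemma nth_lt_iff {A : Finset ℕ} {k t : ℕ} (hk : k < A.card) :
    nth A k < t ↔ k < (A.filter (· < t)).card := by
  constructor
  · intro h
    have hsub : (range (k + 1)).image (nth A) ⊆ A.filter (· < t) := by
      intro y hy
      obtain ⟨a, ha, rfl⟩ := Finset.mem_image.1 hy
      have ha' : a ≤ k := by simpa [Nat.lt_succ_iff] using ha
      exact Finset.mem_filter.2 ⟨nth_mem (lt_of_le_of_lt ha' hk),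
        lt_of_le_of_lt (nth_le_nth ha' hk) h⟩
    have := Finset.card_le_card hsub
    rwa [Finset.card_image_of_injOn (fun a ha b hb => nth_injOn
      (lt_of_lt_of_le (mem_range.1 ha) hk) (lt_of_lt_of_le (mem_range.1 hb) hk)),
      card_range] at this
  · intro h
    by_contra hc
    push_neg at hc
    have hsub : A.filter (· < t) ⊆ (range k).image (nth A) := by
      intro y hy
      obtain ⟨hyA, hyt⟩ := Finset.mem_filter.1 hy
      obtain ⟨a, ha, rfl⟩ := exists_nth hyA
      refine Finset.mem_image.2 ⟨a, mem_range.2 ?_, rfl⟩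
      by_contra hak
      push_neg at hak
      exact absurd (lt_of_lt_of_le hyt hc) (not_lt.2 (nth_le_nth hak ha))
    have := Finset.card_le_card hsub
    have h2 := Finset.card_image_le (s := range k) (f := nth A)
    rw [card_range] at h2
    omega

lemma nth_le_iff {A : Finset ℕ} {k t : ℕ} (hk : k < A.card) :
    nth A k ≤ t ↔ k < (A.filter (· ≤ t)).card := by
  have h1 : A.filter (· ≤ t) = A.filter (· < t + 1) :=
    Finset.filter_congr (fun x _ => by constructor <;> intro <;> omega)
  rw [h1, show (nth A k ≤ t ↔ nth A k < t + 1) by omega]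
  exact nth_lt_iff hk

lemma cntlt_nth {A : Finset ℕ} {k : ℕ} (hk : k < A.card) :
    (A.filter (· < nth A k)).card = k := by
  have h1 : ¬ (nth A k < nth A k) := lt_irrefl _
  rw [nth_lt_iff hk] at h1
  by_cases hk0 : k = 0
  · subst hk0; omega
  · have h2 : nth A (k-1) < nth A k := nth_lt_nth (by omega) hk
    rw [nth_lt_iff (by omega : k - 1 < A.card)] at h2
    omega

lemma nth_cntlt {A : Finset ℕ} {x : ℕ} (hx : x ∈ A) :
    (A.filter (· < x)).card < A.card ∧ nth A ((A.filter (· < x)).card) = x := by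
  obtain ⟨k, hk, rfl⟩ := exists_nth hx
  rw [cntlt_nth hk]
  exact ⟨hk, rfl⟩

lemma cntle_eq_cntlt {A : Finset ℕ} {x : ℕ} (hx : x ∈ A) :
    (A.filter (· ≤ x)).card = (A.filter (· < x)).card + 1 := by
  have : A.filter (· ≤ x) = insert x (A.filter (· < x)) := by
    ext y
    simp only [Finset.mem_filter, Finset.mem_insert]
    constructor
    · rintro ⟨hy, hyx⟩
      rcases eq_or_lt_of_le hyx with rfl | h
      · exact Or.inl rfl
      · exact Or.inr ⟨hy, h⟩
    · rintro (rfl | ⟨hy, h⟩)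
      · exact ⟨hx, le_rfl⟩
      · exact ⟨hy, h.le⟩
  rw [this, Finset.card_insert_of_notMem (by simp)]


lemma dc_eq_range {s : Finset ℕ} (h : ∀ a b, a ≤ b → b ∈ s → a ∈ s) :
    s = range s.card := by
  ext x
  simp only [mem_range]
  constructor
  · intro hx
    have hsub : range (x + 1) ⊆ s := by
      intro y hy
      rw [mem_range] at hy
      exact h y x (by omega) hx
    have := Finset.card_le_card hsub
    rw [card_range] at this
    omega
  · intro hx
    by_contra hc
    have hsub : s ⊆ range x := by
      intro y hy
      rcases lt_or_ge y x with h' | h'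
      · exact mem_range.2 h'
      · exact absurd (h x y h' hy) hc
    have := Finset.card_le_card hsub
    rw [card_range] at this
    omega

/-- Number of cells in column `c` of the diagram of `ν` (parts indexed below `R`). -/
def colLen (R : ℕ) (ν : ℕ → ℕ) (c : ℕ) : ℕ := ((range R).filter (fun b => c < ν b)).card

lemma filter_col_eq {R : ℕ} {ν : ℕ → ℕ} (hmono : ∀ i j, i ≤ j → ν j ≤ ν i) (c : ℕ) :
    (range R).filter (fun b => c < ν b) = range (colLen R ν c) := by
  apply dc_eq_range
  intro a b hab hb
  obtain ⟨hb1, hb2⟩ := Finset.mem_filter.1 hb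
  exact Finset.mem_filter.2 ⟨mem_range.2 (lt_of_le_of_lt hab (mem_range.1 hb1)),
    lt_of_lt_of_le hb2 (hmono a b hab)⟩

lemma colLen_le {R : ℕ} {ν : ℕ → ℕ} (c : ℕ) : colLen R ν c ≤ R := by
  have := Finset.card_le_card (Finset.filter_subset (fun b => c < ν b) (range R))
  rwa [card_range] at this

lemma lt_colLen_iff {R : ℕ} {ν : ℕ → ℕ} (hp : IsPartition R ν) {b c : ℕ} :
    b < colLen R ν c ↔ c < ν b := by
  constructor
  · intro h
    have : b ∈ range (colLen R ν c) := mem_range.2 h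
    rw [← filter_col_eq hp.1 c] at this
    exact (Finset.mem_filter.1 this).2
  · intro h
    have hbR : b < R := by
      by_contra hc
      rw [hp.2 b (le_of_not_gt hc)] at h
      omega
    have : b ∈ (range R).filter (fun b => c < ν b) := Finset.mem_filter.2 ⟨mem_range.2 hbR, h⟩
    rw [filter_col_eq hp.1 c] at this
    exact mem_range.1 this

lemma colLen_anti {R : ℕ} {ν : ℕ → ℕ} {c c' : ℕ} (h : c ≤ c') :
    colLen R ν c' ≤ colLen R ν c := by
  apply Finset.card_le_card
  intro b hb
  obtain ⟨h1, h2⟩ := Finset.mem_filter.1 hb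
  exact Finset.mem_filter.2 ⟨h1, lt_of_le_of_lt h h2⟩

/-- The set of entries in column `c`. -/
def colset (R : ℕ) (ν : ℕ → ℕ) (V : ℕ → ℕ → ℕ) (c : ℕ) : Finset ℕ :=
  (range (colLen R ν c)).image (fun b => V b c)

section Tableau

variable {R q : ℕ} {ν : ℕ → ℕ} {V : ℕ → ℕ → ℕ}
  (hp : IsPartition R ν) (hV : IsSSYT ν q V)

include hp hV

lemma col_strict : ∀ {b b' c : ℕ}, b < b' → b' < colLen R ν c → V b c < V b' c := by
  intro b b' c hbb hb'
  induction b' with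
  | zero => omega
  | succ b' ih =>
    have hcell : c < ν (b' + 1) := (lt_colLen_iff hp).1 hb'
    have hstep : V b' c < V (b' + 1) c := hV.2.2 b' c hcell
    rcases Nat.lt_succ_iff_lt_or_eq.1 hbb with h | rfl
    · exact lt_trans (ih h (by
        have : ν (b' + 1) ≤ ν b' := hp.1 b' (b' + 1) (by omega)
        exact (lt_colLen_iff hp).2 (lt_of_lt_of_le hcell this))) hstep
    · exact hstep

lemma col_injOn {c : ℕ} : Set.InjOn (fun b => V b c) (range (colLen R ν c)) := by
  intro a ha b hb hab
  simp only [Finset.coe_range, Set.mem_Iio] at ha hb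
  rcases lt_trichotomy a b with h | h | h
  · exact absurd hab (col_strict hp hV h hb).ne
  · exact h
  · exact absurd hab.symm (col_strict hp hV h ha).ne

lemma card_colset (c : ℕ) : (colset R ν V c).card = colLen R ν c := by
  rw [colset, Finset.card_image_of_injOn (col_injOn hp hV), card_range]

lemma mem_colset {c : ℕ} {b : ℕ} (hb : b < colLen R ν c) : V b c ∈ colset R ν V c :=
  Finset.mem_image.2 ⟨b, mem_range.2 hb, rfl⟩

lemma nth_colset {c b : ℕ} (hb : b < colLen R ν c) : nth (colset R ν V c) b = V b c := by
  have hmem := mem_colset hp hV hb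
  have hfil : (colset R ν V c).filter (· < V b c) = (range b).image (fun b' => V b' c) := by
    ext y
    simp only [Finset.mem_filter, Finset.mem_image, mem_range, colset]
    constructor
    · rintro ⟨⟨b', hb', rfl⟩, hlt⟩
      refine ⟨b', ?_, rfl⟩
      rcases lt_trichotomy b' b with h | h | h
      · exact h
      · subst h
        omega
      · exact absurd (col_strict hp hV h hb') (by omega)
    · rintro ⟨b', hb', rfl⟩
      exact ⟨⟨b', hb'.trans hb, rfl⟩, col_strict hp hV hb' hb⟩
  have := nth_cntlt (A := colset R ν V c) hmem
  rw [hfil, Finset.card_image_of_injOn (fun a ha a' ha' h => by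
    simp only [Finset.coe_range, Set.mem_Iio] at ha ha'
    exact col_injOn hp hV (by simp; omega) (by simp; omega) h), card_range] at this
  exact this.2

lemma colset_subset (c : ℕ) : colset R ν V c ⊆ Finset.Icc 1 q := by
  intro y hy
  obtain ⟨b, hb, rfl⟩ := Finset.mem_image.1 hy
  rw [mem_range] at hb
  have := hV.1 b c ((lt_colLen_iff hp).1 hb)
  exact Finset.mem_Icc.2 this

lemma colset_dom {c c' : ℕ} (hcc : c ≤ c') (p : ℕ → Prop) [DecidablePred p]
    (hdc : ∀ x y, x ≤ y → p y → p x) :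
    ((colset R ν V c').filter p).card ≤ ((colset R ν V c).filter p).card := by
  have h1 : (colset R ν V c').filter p
      = ((range (colLen R ν c')).filter (fun b => p (V b c'))).image (fun b => V b c') := by
    rw [colset, Finset.filter_image]
  rw [h1, Finset.card_image_of_injOn (Set.InjOn.mono (by
      intro x hx
      simp only [Finset.coe_filter, Set.mem_setOf_eq, mem_range] at hx
      simp only [Finset.coe_range, Set.mem_Iio]
      exact hx.1) (col_injOn hp hV))]
  apply Finset.card_le_card_of_injOn (fun b => V b c)
  · intro b hb
    obtain ⟨hb1, hb2⟩ := Finset.mem_filter.1 hb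
    rw [mem_range] at hb1
    have hblt : b < colLen R ν c := lt_of_lt_of_le hb1 (colLen_anti hcc)
    refine Finset.mem_filter.2 ⟨mem_colset hp hV hblt, ?_⟩
    exact hdc _ _ (hV.2.1 b c c' hcc ((lt_colLen_iff hp).1 hb1)) hb2
  · intro a ha b hb hab
    simp only [Finset.coe_filter, Set.mem_setOf_eq, mem_range] at ha hb
    exact col_injOn hp hV
      (by simp only [Finset.coe_range, Set.mem_Iio]; exact lt_of_lt_of_le ha.1 (colLen_anti hcc))
      (by simp only [Finset.coe_range, Set.mem_Iio]; exact lt_of_lt_of_le hb.1 (colLen_anti hcc)) hab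

end Tableau

lemma row_mono_of_adj {ν : ℕ → ℕ} {W : ℕ → ℕ → ℕ}
    (h : ∀ i j, j + 1 < ν i → W i j ≤ W i (j + 1)) :
    ∀ i j k, j ≤ k → k < ν i → W i j ≤ W i k := by
  intro i j k
  induction k with
  | zero =>
    intro hjk _
    have : j = 0 := by omega
    subst this
    exact le_rfl
  | succ k ih =>
    intro hjk hk
    rcases Nat.lt_succ_iff_lt_or_eq.1 (Nat.lt_succ_of_le hjk) with h' | rfl
    · exact le_trans (ih (by omega) (by omega)) (h i k hk)
    · exact le_rfl

section Relabel

variable {r : ℕ} {S : Finset ℕ}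

/-- relabeling map on the complement of `S`. -/
def phiS (S : Finset ℕ) (x : ℕ) : ℕ := x - (S.filter (· < x)).card

/-- complement of `S` in `{1,…,r}`. -/
def Kset (r : ℕ) (S : Finset ℕ) : Finset ℕ := (Finset.Icc 1 r) \ S

/-- inverse relabeling. -/
def psiS (r : ℕ) (S : Finset ℕ) (y : ℕ) : ℕ := nth (Kset r S) (y - 1)

lemma card_Kset (hS : S ⊆ Finset.Icc 1 r) : (Kset r S).card = r - S.card := by
  rw [Kset, Finset.card_sdiff_of_subset hS, Nat.card_Icc]
  omega

lemma phiS_eq_cntle (hS : S ⊆ Finset.Icc 1 r) {x : ℕ} (hx : x ∈ Kset r S) :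
    phiS S x = ((Kset r S).filter (· ≤ x)).card := by
  obtain ⟨hxI, hxS⟩ := Finset.mem_sdiff.1 hx
  obtain ⟨hx1, hxr⟩ := Finset.mem_Icc.1 hxI
  have h1 : (Kset r S).filter (· ≤ x) = (Finset.Icc 1 x) \ (S.filter (· ≤ x)) := by
    ext z
    simp only [Kset, Finset.mem_filter, Finset.mem_sdiff, Finset.mem_Icc]
    constructor
    · rintro ⟨⟨⟨h1', _⟩, h3'⟩, h4'⟩
      exact ⟨⟨h1', h4'⟩, fun hc => h3' hc.1⟩
    · rintro ⟨⟨h1', h2'⟩, h3'⟩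
      exact ⟨⟨⟨h1', h2'.trans hxr⟩, fun hc => h3' ⟨hc, h2'⟩⟩, h2'⟩
  have hsub : S.filter (· ≤ x) ⊆ Finset.Icc 1 x := by
    intro z hz
    obtain ⟨hz1, hz2⟩ := Finset.mem_filter.1 hz
    exact Finset.mem_Icc.2 ⟨(Finset.mem_Icc.1 (hS hz1)).1, hz2⟩
  have h2 : S.filter (· ≤ x) = S.filter (· < x) :=
    Finset.filter_congr (fun z hz => by
      constructor
      · intro h
        rcases eq_or_lt_of_le h with rfl | h'
        · exact absurd hz hxS
        · exact h'
      · exact le_of_lt)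
  have h3 : (S.filter (· < x)).card ≤ x - 1 := by
    have : S.filter (· < x) ⊆ Finset.Icc 1 (x - 1) := by
      intro z hz
      obtain ⟨hz1, hz2⟩ := Finset.mem_filter.1 hz
      exact Finset.mem_Icc.2 ⟨(Finset.mem_Icc.1 (hS hz1)).1, by omega⟩
    have := Finset.card_le_card this
    rwa [Nat.card_Icc] at this
  rw [h1, Finset.card_sdiff_of_subset hsub, Nat.card_Icc, h2, phiS]
  have h4 : (S.filter (· < x)).card ≤ x + 1 - 1 := by omega
  omega

lemma phiS_mem (hS : S ⊆ Finset.Icc 1 r) {x : ℕ} (hx : x ∈ Kset r S) :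
    phiS S x ∈ Finset.Icc 1 (r - S.card) := by
  rw [phiS_eq_cntle hS hx]
  refine Finset.mem_Icc.2 ⟨?_, ?_⟩
  · have : x ∈ (Kset r S).filter (· ≤ x) := Finset.mem_filter.2 ⟨hx, le_rfl⟩
    exact Finset.card_pos.2 ⟨x, this⟩
  · rw [← card_Kset hS]
    exact Finset.card_le_card (Finset.filter_subset _ _)

lemma psiS_phiS (hS : S ⊆ Finset.Icc 1 r) {x : ℕ} (hx : x ∈ Kset r S) :
    psiS r S (phiS S x) = x := by
  rw [phiS_eq_cntle hS hx, psiS, cntle_eq_cntlt hx]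
  simpa using (nth_cntlt hx).2

lemma phiS_lt_phiS (hS : S ⊆ Finset.Icc 1 r) {x x' : ℕ} (hx : x ∈ Kset r S)
    (hx' : x' ∈ Kset r S) (h : x < x') : phiS S x < phiS S x' := by
  rw [phiS_eq_cntle hS hx, phiS_eq_cntle hS hx', cntle_eq_cntlt hx']
  have : (Kset r S).filter (· ≤ x) ⊆ (Kset r S).filter (· < x') := by
    intro z hz
    obtain ⟨hz1, hz2⟩ := Finset.mem_filter.1 hz
    exact Finset.mem_filter.2 ⟨hz1, lt_of_le_of_lt hz2 h⟩
  have := Finset.card_le_card this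
  omega

lemma phiS_le_iff (hS : S ⊆ Finset.Icc 1 r) {x x' : ℕ} (hx : x ∈ Kset r S)
    (hx' : x' ∈ Kset r S) : phiS S x ≤ phiS S x' ↔ x ≤ x' := by
  constructor
  · intro h
    by_contra hc
    push_neg at hc
    exact absurd h (not_le.2 (phiS_lt_phiS hS hx' hx hc))
  · intro h
    rcases eq_or_lt_of_le h with rfl | h'
    · exact le_rfl
    · exact (phiS_lt_phiS hS hx hx' h').le

lemma phiS_injOn (hS : S ⊆ Finset.Icc 1 r) {x x' : ℕ} (hx : x ∈ Kset r S)
    (hx' : x' ∈ Kset r S) (h : phiS S x = phiS S x') : x = x' := by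
  rcases lt_trichotomy x x' with h' | h' | h'
  · exact absurd h (phiS_lt_phiS hS hx hx' h').ne
  · exact h'
  · exact absurd h.symm (phiS_lt_phiS hS hx' hx h').ne

lemma psiS_mem (hS : S ⊆ Finset.Icc 1 r) {y : ℕ} (hy : y ∈ Finset.Icc 1 (r - S.card)) :
    psiS r S y ∈ Kset r S := by
  obtain ⟨hy1, hy2⟩ := Finset.mem_Icc.1 hy
  exact nth_mem (by rw [card_Kset hS]; omega)

lemma phiS_psiS (hS : S ⊆ Finset.Icc 1 r) {y : ℕ} (hy : y ∈ Finset.Icc 1 (r - S.card)) :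
    phiS S (psiS r S y) = y := by
  obtain ⟨hy1, hy2⟩ := Finset.mem_Icc.1 hy
  have hlt : y - 1 < (Kset r S).card := by rw [card_Kset hS]; omega
  rw [phiS_eq_cntle hS (psiS_mem hS hy), psiS, cntle_eq_cntlt (nth_mem hlt), cntlt_nth hlt]
  omega

/-- relabeled image of a column set. -/
def phimg (S C : Finset ℕ) : Finset ℕ := (C \ S).image (phiS S)

/-- un-relabeled image of a column set. -/
def psimg (r : ℕ) (S D : Finset ℕ) : Finset ℕ := D.image (psiS r S)

lemma sdiff_subset_Kset (hC : C ⊆ Finset.Icc 1 r) : C \ S ⊆ Kset r S := by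
  intro z hz
  obtain ⟨h1, h2⟩ := Finset.mem_sdiff.1 hz
  exact Finset.mem_sdiff.2 ⟨hC h1, h2⟩

lemma phimg_subset (hS : S ⊆ Finset.Icc 1 r) {C : Finset ℕ} (hC : C ⊆ Finset.Icc 1 r) :
    phimg S C ⊆ Finset.Icc 1 (r - S.card) := by
  intro y hy
  obtain ⟨x, hx, rfl⟩ := Finset.mem_image.1 hy
  exact phiS_mem hS (sdiff_subset_Kset hC hx)

lemma card_phimg (hS : S ⊆ Finset.Icc 1 r) {C : Finset ℕ} (hC : C ⊆ Finset.Icc 1 r)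
    (hSC : S ⊆ C) : (phimg S C).card + S.card = C.card := by
  rw [phimg, Finset.card_image_of_injOn (fun x hx x' hx' h =>
    phiS_injOn hS (sdiff_subset_Kset hC hx) (sdiff_subset_Kset hC hx') h),
    Finset.card_sdiff_of_subset hSC]
  have := Finset.card_le_card hSC
  omega

lemma cntle_phimg (hS : S ⊆ Finset.Icc 1 r) {C : Finset ℕ} (hC : C ⊆ Finset.Icc 1 r)
    (hSC : S ⊆ C) {y : ℕ} (hy : y ∈ Kset r S) :
    ((phimg S C).filter (· ≤ phiS S y)).card + (S.filter (· ≤ y)).card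
      = (C.filter (· ≤ y)).card := by
  rw [phimg, Finset.filter_image]
  have h1 : (C \ S).filter (fun x => phiS S x ≤ phiS S y) = (C \ S).filter (· ≤ y) :=
    Finset.filter_congr (fun x hx => by
      rw [phiS_le_iff hS (sdiff_subset_Kset hC hx) hy])
  rw [h1, Finset.card_image_of_injOn (fun x hx x' hx' h => by
    simp only [Finset.coe_filter, Set.mem_setOf_eq] at hx hx'
    exact phiS_injOn hS (sdiff_subset_Kset hC hx.1) (sdiff_subset_Kset hC hx'.1) h)]
  have h2 : (C \ S).filter (· ≤ y) = (C.filter (· ≤ y)) \ (S.filter (· ≤ y)) := by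
    ext z
    simp only [Finset.mem_filter, Finset.mem_sdiff]
    tauto
  have hsub : S.filter (· ≤ y) ⊆ C.filter (· ≤ y) :=
    Finset.filter_subset_filter _ hSC
  rw [h2, Finset.card_sdiff_of_subset hsub]
  have := Finset.card_le_card hsub
  omega

lemma psiS_injOn (hS : S ⊆ Finset.Icc 1 r) {y y' : ℕ} (hy : y ∈ Finset.Icc 1 (r - S.card))
    (hy' : y' ∈ Finset.Icc 1 (r - S.card)) (h : psiS r S y = psiS r S y') : y = y' := by
  have := phiS_psiS hS hy
  rw [h, phiS_psiS hS hy'] at this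
  exact this.symm

lemma psimg_subset (hS : S ⊆ Finset.Icc 1 r) {D : Finset ℕ}
    (hD : D ⊆ Finset.Icc 1 (r - S.card)) : psimg r S D ⊆ Kset r S := by
  intro x hx
  obtain ⟨y, hy, rfl⟩ := Finset.mem_image.1 hx
  exact psiS_mem hS (hD hy)

lemma card_psimg (hS : S ⊆ Finset.Icc 1 r) {D : Finset ℕ}
    (hD : D ⊆ Finset.Icc 1 (r - S.card)) : (psimg r S D).card = D.card :=
  Finset.card_image_of_injOn (fun y hy y' hy' h => psiS_injOn hS (hD hy) (hD hy') h)

lemma cntle_psimg (hS : S ⊆ Finset.Icc 1 r) {D : Finset ℕ}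
    (hD : D ⊆ Finset.Icc 1 (r - S.card)) (t : ℕ) :
    ((psimg r S D).filter (· ≤ t)).card
      = (D.filter (· ≤ ((Kset r S).filter (· ≤ t)).card)).card := by
  rw [psimg, Finset.filter_image]
  have h1 : D.filter (fun y => psiS r S y ≤ t)
      = D.filter (· ≤ ((Kset r S).filter (· ≤ t)).card) :=
    Finset.filter_congr (fun y hy => by
      obtain ⟨hy1, hy2⟩ := Finset.mem_Icc.1 (hD hy)
      have hk : y - 1 < (Kset r S).card := by rw [card_Kset hS]; omega
      rw [psiS, nth_le_iff hk]
      omega)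
  rw [h1, Finset.card_image_of_injOn (fun y hy y' hy' h => by
    simp only [Finset.coe_filter, Set.mem_setOf_eq] at hy hy'
    exact psiS_injOn hS (hD hy.1) (hD hy'.1) h)]

lemma disjoint_S_psimg (hS : S ⊆ Finset.Icc 1 r) {D : Finset ℕ}
    (hD : D ⊆ Finset.Icc 1 (r - S.card)) : Disjoint S (psimg r S D) := by
  rw [Finset.disjoint_right]
  intro x hx
  have := psimg_subset hS hD hx
  exact (Finset.mem_sdiff.1 this).2

lemma recover_C (hS : S ⊆ Finset.Icc 1 r) {C : Finset ℕ} (hC : C ⊆ Finset.Icc 1 r)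
    (hSC : S ⊆ C) : S ∪ psimg r S (phimg S C) = C := by
  have h1 : psimg r S (phimg S C) = C \ S := by
    rw [psimg, phimg, Finset.image_image]
    have : ∀ x ∈ C \ S, (psiS r S ∘ phiS S) x = x := fun x hx =>
      psiS_phiS hS (sdiff_subset_Kset hC hx)
    rw [Finset.image_congr this]
    exact Finset.image_id
  rw [h1, Finset.union_sdiff_of_subset hSC]

lemma recover_D (hS : S ⊆ Finset.Icc 1 r) {D : Finset ℕ}
    (hD : D ⊆ Finset.Icc 1 (r - S.card)) : phimg S (S ∪ psimg r S D) = D := by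
  have h1 : (S ∪ psimg r S D) \ S = psimg r S D :=
    Finset.union_sdiff_cancel_left (disjoint_S_psimg hS hD)
  rw [phimg, h1, psimg, Finset.image_image]
  have : ∀ y ∈ D, (phiS S ∘ psiS r S) y = y := fun y hy => phiS_psiS hS (hD hy)
  rw [Finset.image_congr this]
  exact Finset.image_id

end Relabel

/-- forward map: delete the values of `S` from each column and relabel. -/
def Phi (r : ℕ) (nu mu : ℕ → ℕ) (S : Finset ℕ) (T : ℕ → ℕ → ℕ) : ℕ → ℕ → ℕ :=
  fun a c => if a < colLen r mu c then nth (phimg S (colset r nu T c)) a else 0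

/-- backward map: reinsert the values of `S` into each column. -/
def Psi (r : ℕ) (nu mu : ℕ → ℕ) (S : Finset ℕ) (U : ℕ → ℕ → ℕ) : ℕ → ℕ → ℕ :=
  fun b c => if b < colLen r nu c then nth (S ∪ psimg r S (colset r mu U c)) b else 0

lemma cntle_union {A B : Finset ℕ} (h : Disjoint A B) (p : ℕ → Prop) [DecidablePred p] :
    ((A ∪ B).filter p).card = (A.filter p).card + (B.filter p).card := by
  rw [Finset.filter_union,
    Finset.card_union_of_disjoint (h.mono (Finset.filter_subset _ _) (Finset.filter_subset _ _))]

lemma hasIStrip_iff {R q w : ℕ} {ν : ℕ → ℕ} {V : ℕ → ℕ → ℕ} (hp : IsPartition R ν)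
    (hV : IsSSYT ν q V) (v : ℕ) :
    HasIStrip ν w V v ↔ ∀ c, c < w → v ∈ colset R ν V c := by
  constructor
  · rintro ⟨f, _, hf2⟩ c hc
    obtain ⟨hcell, hval⟩ := hf2 c hc
    have : f c < colLen R ν c := (lt_colLen_iff hp).2 hcell
    have := mem_colset hp hV this
    rwa [hval] at this
  · intro h
    refine ⟨fun c => ((colset R ν V c).filter (· < v)).card, ?_, ?_⟩
    · intro c c' hcc _
      exact colset_dom hp hV hcc (· < v) (fun x y hxy hy => lt_of_le_of_lt hxy hy)
    · intro c hc
      obtain ⟨hlt, hnth⟩ := nth_cntlt (h c hc)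
      rw [card_colset hp hV] at hlt
      rw [nth_colset hp hV hlt] at hnth
      exact ⟨(lt_colLen_iff hp).1 hlt, hnth⟩

section Main

variable {n r m : ℕ} {lam : ℕ → ℕ} {S : Finset ℕ}

lemma lam_eq_w (hp : IsPartition r lam) (hsub : ∀ i, lam i ≤ n - r)
    (hm : m = ((Finset.range r).filter (fun i => lam i = n - r)).card)
    {b : ℕ} (hb : b < m) : lam b = n - r := by
  have hdc : (Finset.range r).filter (fun i => lam i = n - r)
      = range ((Finset.range r).filter (fun i => lam i = n - r)).card := by
    apply dc_eq_range
    intro a b' hab hb'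
    obtain ⟨h1, h2⟩ := Finset.mem_filter.1 hb'
    refine Finset.mem_filter.2 ⟨mem_range.2 (lt_of_le_of_lt hab (mem_range.1 h1)), ?_⟩
    have := hp.1 a b' hab
    have := hsub a
    omega
  have : b ∈ (Finset.range r).filter (fun i => lam i = n - r) := by
    rw [hdc, ← hm]
    exact mem_range.2 hb
  exact (Finset.mem_filter.1 this).2

lemma m_le_r (hm : m = ((Finset.range r).filter (fun i => lam i = n - r)).card) : m ≤ r := by
  rw [hm]
  have := Finset.card_le_card (Finset.filter_subset (fun i => lam i = n - r) (range r))
  rwa [card_range] at this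

lemma colLen_ge_j (hp : IsPartition r lam) (hsub : ∀ i, lam i ≤ n - r)
    (hm : m = ((Finset.range r).filter (fun i => lam i = n - r)).card)
    (hjm : S.card ≤ m) {c : ℕ} (hc : c < n - r) : S.card ≤ colLen r lam c := by
  have hmr := m_le_r (lam := lam) hm
  have hsub2 : range S.card ⊆ (range r).filter (fun b => c < lam b) := by
    intro b hb
    rw [mem_range] at hb
    have hbm : b < m := by omega
    refine Finset.mem_filter.2 ⟨mem_range.2 (by omega), ?_⟩
    rw [lam_eq_w hp hsub hm hbm]
    exact hc
  have := Finset.card_le_card hsub2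
  rwa [card_range] at this

lemma colLen_top (hsub : ∀ i, lam i ≤ n - r) {c : ℕ} (hc : n - r ≤ c) :
    colLen r lam c = 0 := by
  rw [colLen, Finset.card_eq_zero, Finset.filter_eq_empty_iff]
  intro b _
  have := hsub b
  omega

lemma cell_w (hsub : ∀ i, lam i ≤ n - r) {c : ℕ} (hc : 0 < colLen r lam c) : c < n - r := by
  by_contra h
  rw [colLen_top hsub (by omega)] at hc
  omega

lemma shift_partition (hp : IsPartition r lam) (j : ℕ) : IsPartition r (shiftPart lam j) :=
  ⟨fun i k hik => hp.1 _ _ (by omega), fun i hi => hp.2 _ (by omega)⟩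

lemma colLen_shift (hp : IsPartition r lam) (j c : ℕ) :
    colLen r (shiftPart lam j) c = colLen r lam c - j := by
  have hfil : (range r).filter (fun b => c < shiftPart lam j b)
      = range (colLen r lam c - j) := by
    ext b
    simp only [Finset.mem_filter, mem_range]
    constructor
    · rintro ⟨hbr, hc⟩
      have : b + j < colLen r lam c := (lt_colLen_iff hp).2 hc
      omega
    · intro hb
      have hcl := colLen_le (R := r) (ν := lam) c
      have h1 : b + j < colLen r lam c := by omega
      exact ⟨by omega, (lt_colLen_iff hp).1 h1⟩
  rw [colLen, hfil, card_range]

end Main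

section Maps

variable {n r m : ℕ} {lam : ℕ → ℕ} {S : Finset ℕ} {T U : ℕ → ℕ → ℕ}

lemma colset_Phi (hp : IsPartition r lam) (hsub : ∀ i, lam i ≤ n - r)
    (hm : m = ((Finset.range r).filter (fun i => lam i = n - r)).card)
    (hjm : S.card ≤ m) (hS : S ⊆ Finset.Icc 1 r) (hT : IsSSYT lam r T)
    (hstrip : ∀ v ∈ S, HasIStrip lam (n - r) T v) {c : ℕ} (hc : c < n - r) :
    colset r (shiftPart lam S.card) (Phi r lam (shiftPart lam S.card) S T) c
      = phimg S (colset r lam T c) := by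
  have hSC : S ⊆ colset r lam T c := fun v hv => (hasIStrip_iff hp hT v).1 (hstrip v hv) c hc
  have hcardD : (phimg S (colset r lam T c)).card = colLen r (shiftPart lam S.card) c := by
    have h1 := card_phimg hS (colset_subset hp hT c) hSC
    have h2 := colLen_shift hp S.card c
    have h3 := colLen_ge_j hp hsub hm hjm hc
    have h4 := card_colset hp hT c
    omega
  rw [colset]
  have hcongr : ∀ a ∈ range (colLen r (shiftPart lam S.card) c),
      Phi r lam (shiftPart lam S.card) S T a c = nth (phimg S (colset r lam T c)) a := by
    intro a ha
    simp only [Phi]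
    rw [if_pos (mem_range.1 ha)]
  rw [Finset.image_congr (fun a ha => hcongr a (by simpa using ha)), ← hcardD, image_nth]

lemma Phi_mem (hp : IsPartition r lam) (hsub : ∀ i, lam i ≤ n - r)
    (hm : m = ((Finset.range r).filter (fun i => lam i = n - r)).card)
    (hjm : S.card ≤ m) (hS : S ⊆ Finset.Icc 1 r) (hT : IsSSYT lam r T)
    (hstrip : ∀ v ∈ S, HasIStrip lam (n - r) T v) :
    IsSSYT (shiftPart lam S.card) (r - S.card) (Phi r lam (shiftPart lam S.card) S T) ∧
      ZeroOutside (shiftPart lam S.card) (Phi r lam (shiftPart lam S.card) S T) := by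
  set mu := shiftPart lam S.card with hmudef
  have hpmu : IsPartition r mu := shift_partition hp S.card
  have hcellw : ∀ c, 0 < colLen r mu c → c < n - r := by
    intro c h
    have h2 : colLen r mu c = colLen r lam c - S.card := colLen_shift hp S.card c
    exact cell_w hsub (by omega)
  have hSC : ∀ c, c < n - r → S ⊆ colset r lam T c :=
    fun c hc v hv => (hasIStrip_iff hp hT v).1 (hstrip v hv) c hc
  have hcardD : ∀ c, c < n - r → (phimg S (colset r lam T c)).card = colLen r mu c := by
    intro c hc
    have h1 := card_phimg hS (colset_subset hp hT c) (hSC c hc)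
    have h2 : colLen r mu c = colLen r lam c - S.card := colLen_shift hp S.card c
    have h3 := colLen_ge_j hp hsub hm hjm hc
    have h4 := card_colset hp hT c
    omega
  have hentry : ∀ a c, a < colLen r mu c →
      nth (phimg S (colset r lam T c)) a ∈ Finset.Icc 1 (r - S.card) := by
    intro a c ha
    have hcw := hcellw c (by omega)
    have hmem := nth_mem (A := phimg S (colset r lam T c)) (by rw [hcardD c hcw]; exact ha)
    exact phimg_subset hS (colset_subset hp hT c) hmem
  refine ⟨⟨?_, ?_, ?_⟩, ?_⟩
  · intro i c hcell
    have hi : i < colLen r mu c := (lt_colLen_iff hpmu).2 hcell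
    have := hentry i c hi
    simp only [Phi]
    rw [if_pos hi]
    exact Finset.mem_Icc.1 this
  · apply row_mono_of_adj
    intro i c hcell
    have hi1 : i < colLen r mu (c + 1) := (lt_colLen_iff hpmu).2 hcell
    have hi0 : i < colLen r mu c := lt_of_lt_of_le hi1 (colLen_anti (by omega))
    have hcw1 : c + 1 < n - r := hcellw (c + 1) (by omega)
    have hcw0 : c < n - r := by omega
    simp only [Phi]
    rw [if_pos hi0, if_pos hi1]
    have hx : nth (phimg S (colset r lam T (c + 1))) i ∈ phimg S (colset r lam T (c + 1)) :=
      nth_mem (by rw [hcardD (c + 1) hcw1]; exact hi1)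
    obtain ⟨y, hy, hxy⟩ := Finset.mem_image.1 hx
    have hyK : y ∈ Kset r S := sdiff_subset_Kset (colset_subset hp hT (c + 1)) hy
    have e2 := cntle_phimg hS (colset_subset hp hT (c + 1)) (hSC (c + 1) hcw1) hyK
    have e1 := cntle_phimg hS (colset_subset hp hT c) (hSC c hcw0) hyK
    have edom : ((colset r lam T (c + 1)).filter (· ≤ y)).card
        ≤ ((colset r lam T c).filter (· ≤ y)).card :=
      colset_dom hp hT (by omega) (· ≤ y) (fun x x' hxx' h => le_trans hxx' h)
    have hii : i < ((phimg S (colset r lam T (c + 1))).filter (· ≤ phiS S y)).card := by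
      rw [← nth_le_iff (by rw [hcardD (c + 1) hcw1]; exact hi1)]
      rw [hxy]
    have hii' : i < ((phimg S (colset r lam T c)).filter (· ≤ phiS S y)).card := by omega
    have := (nth_le_iff (t := phiS S y)
      (by rw [hcardD c hcw0]; exact hi0)).2 hii'
    rw [hxy] at this
    exact this
  · intro i c hcell
    have hi1 : i + 1 < colLen r mu c := (lt_colLen_iff hpmu).2 hcell
    simp only [Phi]
    rw [if_pos hi1, if_pos (by omega : i < colLen r mu c)]
    exact nth_lt_nth (by omega) (by rw [hcardD c (hcellw c (by omega))]; exact hi1)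
  · intro i c hcell
    simp only [Phi]
    exact if_neg (fun hc => hcell ((lt_colLen_iff hpmu).1 hc))

lemma colset_Psi (hp : IsPartition r lam) (hsub : ∀ i, lam i ≤ n - r)
    (hm : m = ((Finset.range r).filter (fun i => lam i = n - r)).card)
    (hjm : S.card ≤ m) (hS : S ⊆ Finset.Icc 1 r)
    (hU : IsSSYT (shiftPart lam S.card) (r - S.card) U) {c : ℕ} (hc : c < n - r) :
    colset r lam (Psi r lam (shiftPart lam S.card) S U) c
      = S ∪ psimg r S (colset r (shiftPart lam S.card) U c) := by
  set mu := shiftPart lam S.card with hmudef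
  have hpmu : IsPartition r mu := shift_partition hp S.card
  have hDsub := colset_subset hpmu hU c
  have hcardE : (S ∪ psimg r S (colset r mu U c)).card = colLen r lam c := by
    rw [Finset.card_union_of_disjoint (disjoint_S_psimg hS hDsub), card_psimg hS hDsub,
      card_colset hpmu hU]
    have h2 : colLen r mu c = colLen r lam c - S.card := colLen_shift hp S.card c
    have h3 := colLen_ge_j hp hsub hm hjm hc
    omega
  rw [colset]
  have hcongr : ∀ b ∈ range (colLen r lam c),
      Psi r lam mu S U b c = nth (S ∪ psimg r S (colset r mu U c)) b := by
    intro b hb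
    simp only [Psi]
    rw [if_pos (mem_range.1 hb)]
  rw [Finset.image_congr (fun b hb => hcongr b (by simpa using hb)), ← hcardE, image_nth]

lemma Psi_mem (hp : IsPartition r lam) (hsub : ∀ i, lam i ≤ n - r)
    (hm : m = ((Finset.range r).filter (fun i => lam i = n - r)).card)
    (hjm : S.card ≤ m) (hS : S ⊆ Finset.Icc 1 r)
    (hU : IsSSYT (shiftPart lam S.card) (r - S.card) U) :
    IsSSYT lam r (Psi r lam (shiftPart lam S.card) S U) ∧
      ZeroOutside lam (Psi r lam (shiftPart lam S.card) S U) ∧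
      ∀ v ∈ S, HasIStrip lam (n - r) (Psi r lam (shiftPart lam S.card) S U) v := by
  set mu := shiftPart lam S.card with hmudef
  have hpmu : IsPartition r mu := shift_partition hp S.card
  have hDsub : ∀ c, colset r mu U c ⊆ Finset.Icc 1 (r - S.card) :=
    fun c => colset_subset hpmu hU c
  have hcardE : ∀ c, c < n - r → (S ∪ psimg r S (colset r mu U c)).card = colLen r lam c := by
    intro c hc
    rw [Finset.card_union_of_disjoint (disjoint_S_psimg hS (hDsub c)), card_psimg hS (hDsub c),
      card_colset hpmu hU]
    have h2 : colLen r mu c = colLen r lam c - S.card := colLen_shift hp S.card c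
    have h3 := colLen_ge_j hp hsub hm hjm hc
    omega
  have hEsub : ∀ c, (S ∪ psimg r S (colset r mu U c)) ⊆ Finset.Icc 1 r := by
    intro c
    apply Finset.union_subset hS
    intro x hx
    exact (Finset.mem_sdiff.1 (psimg_subset hS (hDsub c) hx)).1
  have hSSYT : IsSSYT lam r (Psi r lam mu S U) := by
    refine ⟨?_, ?_, ?_⟩
    · intro i c hcell
      have hi : i < colLen r lam c := (lt_colLen_iff hp).2 hcell
      have hcw : c < n - r := cell_w hsub (by omega)
      simp only [Psi]
      rw [if_pos hi]
      exact Finset.mem_Icc.1 (hEsub c (nth_mem (by rw [hcardE c hcw]; exact hi)))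
    · apply row_mono_of_adj
      intro i c hcell
      have hi1 : i < colLen r lam (c + 1) := (lt_colLen_iff hp).2 hcell
      have hi0 : i < colLen r lam c := lt_of_lt_of_le hi1 (colLen_anti (by omega))
      have hcw1 : c + 1 < n - r := cell_w hsub (by omega)
      have hcw0 : c < n - r := by omega
      simp only [Psi]
      rw [if_pos hi0, if_pos hi1]
      set t := nth (S ∪ psimg r S (colset r mu U (c + 1))) i with ht
      have hii : i < ((S ∪ psimg r S (colset r mu U (c + 1))).filter (· ≤ t)).card := by
        rw [← nth_le_iff (by rw [hcardE (c + 1) hcw1]; exact hi1)]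
      have e2 := cntle_union (disjoint_S_psimg hS (hDsub (c + 1))) (· ≤ t)
      have e1 := cntle_union (disjoint_S_psimg hS (hDsub c)) (· ≤ t)
      have p2 := cntle_psimg hS (hDsub (c + 1)) t
      have p1 := cntle_psimg hS (hDsub c) t
      have edom : ((colset r mu U (c + 1)).filter
            (· ≤ ((Kset r S).filter (· ≤ t)).card)).card
          ≤ ((colset r mu U c).filter (· ≤ ((Kset r S).filter (· ≤ t)).card)).card :=
        colset_dom hpmu hU (by omega) _ (fun x x' hxx' h => le_trans hxx' h)
      have hii' : i < ((S ∪ psimg r S (colset r mu U c)).filter (· ≤ t)).card := by omega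
      exact (nth_le_iff (by rw [hcardE c hcw0]; exact hi0)).2 hii'
    · intro i c hcell
      have hi1 : i + 1 < colLen r lam c := (lt_colLen_iff hp).2 hcell
      have hcw : c < n - r := cell_w hsub (by omega)
      simp only [Psi]
      rw [if_pos hi1, if_pos (by omega : i < colLen r lam c)]
      exact nth_lt_nth (by omega) (by rw [hcardE c hcw]; exact hi1)
  refine ⟨hSSYT, ?_, ?_⟩
  · intro i c hcell
    simp only [Psi]
    exact if_neg (fun hc => hcell ((lt_colLen_iff hp).1 hc))
  · intro v hv
    refine (hasIStrip_iff hp hSSYT v).2 ?_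
    intro c hc
    rw [colset_Psi hp hsub hm hjm hS hU hc]
    exact Finset.mem_union_left _ hv

lemma Psi_Phi (hp : IsPartition r lam) (hsub : ∀ i, lam i ≤ n - r)
    (hm : m = ((Finset.range r).filter (fun i => lam i = n - r)).card)
    (hjm : S.card ≤ m) (hS : S ⊆ Finset.Icc 1 r) (hT : IsSSYT lam r T)
    (hZ : ZeroOutside lam T) (hstrip : ∀ v ∈ S, HasIStrip lam (n - r) T v) :
    Psi r lam (shiftPart lam S.card) S (Phi r lam (shiftPart lam S.card) S T) = T := by
  set mu := shiftPart lam S.card with hmudef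
  funext b c
  by_cases hcell : b < colLen r lam c
  · have hcw : c < n - r := cell_w hsub (by omega)
    have hSC : S ⊆ colset r lam T c :=
      fun v hv => (hasIStrip_iff hp hT v).1 (hstrip v hv) c hcw
    show Psi r lam mu S (Phi r lam mu S T) b c = T b c
    simp only [Psi]
    rw [if_pos hcell, colset_Phi hp hsub hm hjm hS hT hstrip hcw,
      recover_C hS (colset_subset hp hT c) hSC, nth_colset hp hT hcell]
  · show Psi r lam mu S (Phi r lam mu S T) b c = T b c
    simp only [Psi]
    rw [if_neg hcell]
    exact (hZ b c (fun h => hcell ((lt_colLen_iff hp).2 h))).symm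

lemma Phi_Psi (hp : IsPartition r lam) (hsub : ∀ i, lam i ≤ n - r)
    (hm : m = ((Finset.range r).filter (fun i => lam i = n - r)).card)
    (hjm : S.card ≤ m) (hS : S ⊆ Finset.Icc 1 r)
    (hU : IsSSYT (shiftPart lam S.card) (r - S.card) U)
    (hZU : ZeroOutside (shiftPart lam S.card) U) :
    Phi r lam (shiftPart lam S.card) S (Psi r lam (shiftPart lam S.card) S U) = U := by
  set mu := shiftPart lam S.card with hmudef
  have hpmu : IsPartition r mu := shift_partition hp S.card
  funext a c
  by_cases hcell : a < colLen r mu c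
  · have hcw : c < n - r := by
      have h2 : colLen r mu c = colLen r lam c - S.card := colLen_shift hp S.card c
      exact cell_w hsub (by omega)
    show Phi r lam mu S (Psi r lam mu S U) a c = U a c
    simp only [Phi]
    rw [if_pos hcell, colset_Psi hp hsub hm hjm hS hU hcw,
      recover_D hS (colset_subset hpmu hU c), nth_colset hpmu hU hcell]
  · show Phi r lam mu S (Psi r lam mu S U) a c = U a c
    simp only [Phi]
    rw [if_neg hcell]
    exact (hZU a c (fun h => hcell ((lt_colLen_iff hpmu).2 h))).symm

end Maps

section Count

variable {n r m : ℕ} {lam : ℕ → ℕ} {S : Finset ℕ}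

lemma finite_tabs (R B q : ℕ) (ν : ℕ → ℕ) (hR : ∀ i, R ≤ i → ν i = 0) (hB : ∀ i, ν i ≤ B) :
    {T : ℕ → ℕ → ℕ | IsSSYT ν q T ∧ ZeroOutside ν T}.Finite := by
  classical
  have hinj : Set.InjOn (fun (T : ℕ → ℕ → ℕ) (p : Fin R × Fin B) =>
      (⟨min (T p.1 p.2) q, Nat.lt_succ_of_le (Nat.min_le_right _ _)⟩ : Fin (q + 1)))
      {T : ℕ → ℕ → ℕ | IsSSYT ν q T ∧ ZeroOutside ν T} := by
    intro T hT T' hT' h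
    simp only [Set.mem_setOf_eq] at hT hT'
    funext i c
    by_cases hic : i < R ∧ c < B
    · have h0 := congrFun h (⟨i, hic.1⟩, ⟨c, hic.2⟩)
      have h1 : min (T i c) q = min (T' i c) q := congrArg Fin.val h0
      clear h h0
      have hTq : ∀ (W : ℕ → ℕ → ℕ), IsSSYT ν q W ∧ ZeroOutside ν W → W i c ≤ q := by
        rintro W ⟨hW1, hW2⟩
        by_cases hcell : c < ν i
        · exact (hW1.1 i c hcell).2
        · rw [hW2 i c hcell]
          omega
      have t1 := hTq T hT
      have t2 := hTq T' hT'
      omega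
    · have hcell : ¬ c < ν i := by
        push_neg at hic
        rcases lt_or_ge i R with h' | h'
        · have := hB i
          have := hic h'
          omega
        · rw [hR i h']
          omega
      rw [hT.2 i c hcell, hT'.2 i c hcell]
  exact Set.Finite.of_finite_image (Set.toFinite _) hinj

lemma main_count (hrn : r < n) (hp : IsPartition r lam) (hsub : ∀ i, lam i ≤ n - r)
    (hm : m = ((Finset.range r).filter (fun i => lam i = n - r)).card)
    (hS : S ⊆ Finset.Icc 1 r) (hjm : S.card ≤ m) :
    {T : ℕ → ℕ → ℕ | IsSSYT lam r T ∧ ZeroOutside lam T ∧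
        ∀ v ∈ S, HasIStrip lam (n - r) T v}.ncard
      = ssytCount (r - S.card) (shiftPart lam S.card) := by
  classical
  have hinj : Set.InjOn (Phi r lam (shiftPart lam S.card) S)
      {T : ℕ → ℕ → ℕ | IsSSYT lam r T ∧ ZeroOutside lam T ∧
        ∀ v ∈ S, HasIStrip lam (n - r) T v} := by
    intro T hT T' hT' h
    obtain ⟨hT1, hT2, hT3⟩ := hT
    obtain ⟨hT1', hT2', hT3'⟩ := hT' 
    have e1 := Psi_Phi hp hsub hm hjm hS hT1 hT2 hT3
    have e2 := Psi_Phi hp hsub hm hjm hS hT1' hT2' hT3'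
    rw [← e1, h, e2]
  have himg : Phi r lam (shiftPart lam S.card) S ''
      {T : ℕ → ℕ → ℕ | IsSSYT lam r T ∧ ZeroOutside lam T ∧
        ∀ v ∈ S, HasIStrip lam (n - r) T v}
      = {U : ℕ → ℕ → ℕ | IsSSYT (shiftPart lam S.card) (r - S.card) U ∧
          ZeroOutside (shiftPart lam S.card) U} := by
    apply Set.Subset.antisymm
    · rintro _ ⟨T, ⟨hT1, _, hT3⟩, rfl⟩
      exact Phi_mem hp hsub hm hjm hS hT1 hT3
    · rintro U ⟨hU1, hU2⟩
      exact ⟨Psi r lam (shiftPart lam S.card) S U, Psi_mem hp hsub hm hjm hS hU1,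
        Phi_Psi hp hsub hm hjm hS hU1 hU2⟩
  rw [ssytCount, ← himg, Set.ncard_image_of_injOn hinj]

lemma empty_count (hrn : r < n) (hp : IsPartition r lam) (hsub : ∀ i, lam i ≤ n - r)
    (hm : m = ((Finset.range r).filter (fun i => lam i = n - r)).card)
    (hS : S ⊆ Finset.Icc 1 r) (hjm : m < S.card) :
    {T : ℕ → ℕ → ℕ | IsSSYT lam r T ∧ ZeroOutside lam T ∧
        ∀ v ∈ S, HasIStrip lam (n - r) T v} = ∅ := by
  rw [Set.eq_empty_iff_forall_notMem]
  rintro T ⟨hT, _, hstrip⟩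
  have hw : 0 < n - r := by omega
  have hcol : S ⊆ colset r lam T (n - r - 1) :=
    fun v hv => (hasIStrip_iff hp hT v).1 (hstrip v hv) _ (by omega)
  have hcard : S.card ≤ colLen r lam (n - r - 1) := by
    have := Finset.card_le_card hcol
    rwa [card_colset hp hT] at this
  have hj1 : S.card - 1 < colLen r lam (n - r - 1) := by omega
  have hlam : n - r - 1 < lam (S.card - 1) := (lt_colLen_iff hp).1 hj1
  have hlamw : lam (S.card - 1) = n - r := by
    have := hsub (S.card - 1)
    omega
  have hjr : S.card - 1 < r := by
    by_contra hc
    rw [hp.2 (S.card - 1) (by omega)] at hlamw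
    omega
  have hsub2 : range S.card ⊆ (range r).filter (fun i => lam i = n - r) := by
    intro b hb
    rw [mem_range] at hb
    have h1 : lam (S.card - 1) ≤ lam b := hp.1 b (S.card - 1) (by omega)
    have h2 := hsub b
    exact Finset.mem_filter.2 ⟨mem_range.2 (by omega), by omega⟩
  have := Finset.card_le_card hsub2
  rw [card_range, ← hm] at this
  omega

end Count

theorem stmt2_aux (n r : ℕ) (hrn : r < n) (lam : ℕ → ℕ) (hp : IsPartition r lam)
    (hsub : ∀ i, lam i ≤ n - r)
    (m : ℕ) (hm : m = ((Finset.range r).filter (fun i => lam i = n - r)).card) :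
    ({T : ℕ → ℕ → ℕ | IsSSYT lam r T ∧ ZeroOutside lam T ∧
        ∀ v, 1 ≤ v → v ≤ r → ¬ HasIStrip lam (n - r) T v}.ncard : ℤ)
      = ∑ j ∈ Finset.range (m + 1),
          (-1 : ℤ) ^ j * (r.choose j : ℤ) * (ssytCount (r - j) (shiftPart lam j) : ℤ) := by
  classical
  have hfin : {T : ℕ → ℕ → ℕ | IsSSYT lam r T ∧ ZeroOutside lam T}.Finite :=
    finite_tabs r n r lam hp.2 (fun i => le_trans (hsub i) (by omega))
  set F := hfin.toFinset with hFdef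
  have hmF : ∀ T, T ∈ F ↔ (IsSSYT lam r T ∧ ZeroOutside lam T) := fun T => hfin.mem_toFinset
  have hLHS : {T : ℕ → ℕ → ℕ | IsSSYT lam r T ∧ ZeroOutside lam T ∧
        ∀ v, 1 ≤ v → v ≤ r → ¬ HasIStrip lam (n - r) T v}
      = ↑(F.filter (fun T => ∀ v ∈ Finset.Icc 1 r, ¬ HasIStrip lam (n - r) T v)) := by
    ext T
    rw [Finset.mem_coe, Finset.mem_filter, hmF, Set.mem_setOf_eq]
    constructor
    · rintro ⟨h1, h2, h3⟩
      exact ⟨⟨h1, h2⟩, fun v hv => h3 v (Finset.mem_Icc.1 hv).1 (Finset.mem_Icc.1 hv).2⟩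
    · rintro ⟨⟨h1, h2⟩, h3⟩
      exact ⟨h1, h2, fun v h1' h2' => h3 v (Finset.mem_Icc.2 ⟨h1', h2'⟩)⟩
  rw [hLHS, Set.ncard_coe_finset]
  have hcount : ∀ Sf : Finset ℕ, Sf ⊆ Finset.Icc 1 r →
      ((F.filter (fun T => ∀ v ∈ Sf, HasIStrip lam (n - r) T v)).card : ℤ)
        = if Sf.card ≤ m then ((ssytCount (r - Sf.card) (shiftPart lam Sf.card) : ℕ) : ℤ)
          else 0 := by
    intro Sf hSf
    have hset : ((F.filter (fun T => ∀ v ∈ Sf, HasIStrip lam (n - r) T v)).card : ℕ)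
        = {T : ℕ → ℕ → ℕ | IsSSYT lam r T ∧ ZeroOutside lam T ∧
            ∀ v ∈ Sf, HasIStrip lam (n - r) T v}.ncard := by
      rw [← Set.ncard_coe_finset]
      congr 1
      ext T
      rw [Finset.mem_coe, Finset.mem_filter, hmF, Set.mem_setOf_eq]
      tauto
    by_cases hjm : Sf.card ≤ m
    · rw [if_pos hjm, hset, main_count hrn hp hsub hm hSf hjm]
    · rw [if_neg hjm, hset, empty_count hrn hp hsub hm hSf (by omega), Set.ncard_empty]
      exact Nat.cast_zero
  have hIE : ((F.filter (fun T => ∀ v ∈ Finset.Icc 1 r, ¬ HasIStrip lam (n - r) T v)).card : ℤ)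
      = ∑ Sf ∈ (Finset.Icc 1 r).powerset,
          (-1 : ℤ) ^ Sf.card *
            ((F.filter (fun T => ∀ v ∈ Sf, HasIStrip lam (n - r) T v)).card : ℤ) := by
    have e0 : ∀ T : ℕ → ℕ → ℕ,
        (if (∀ v ∈ Finset.Icc 1 r, ¬ HasIStrip lam (n - r) T v) then (1 : ℤ) else 0)
          = ∏ v ∈ Finset.Icc 1 r,
              ((if HasIStrip lam (n - r) T v then (-1 : ℤ) else 0) + 1) := by
      intro T
      by_cases h : ∀ v ∈ Finset.Icc 1 r, ¬ HasIStrip lam (n - r) T v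
      · rw [if_pos h]
        symm
        apply Finset.prod_eq_one
        intro v hv
        rw [if_neg (h v hv)]
        ring
      · rw [if_neg h]
        push_neg at h
        obtain ⟨v, hv, hstr⟩ := h
        symm
        apply Finset.prod_eq_zero hv
        rw [if_pos hstr]
        ring
    have e1 : ∀ T : ℕ → ℕ → ℕ,
        (∏ v ∈ Finset.Icc 1 r, ((if HasIStrip lam (n - r) T v then (-1 : ℤ) else 0) + 1))
          = ∑ Sf ∈ (Finset.Icc 1 r).powerset, (-1 : ℤ) ^ Sf.card *
              (if (∀ v ∈ Sf, HasIStrip lam (n - r) T v) then (1 : ℤ) else 0) := by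
      intro T
      rw [Finset.prod_add]
      apply Finset.sum_congr rfl
      intro Sf _
      rw [Finset.prod_const_one, mul_one]
      have hcg : ∀ v ∈ Sf, (if HasIStrip lam (n - r) T v then (-1 : ℤ) else 0)
          = (-1) * (if HasIStrip lam (n - r) T v then (1 : ℤ) else 0) := by
        intro v _
        by_cases h : HasIStrip lam (n - r) T v
        · rw [if_pos h, if_pos h]
          ring
        · rw [if_neg h, if_neg h]
          ring
      rw [Finset.prod_congr rfl hcg, Finset.prod_mul_distrib, Finset.prod_const,
        Finset.prod_boole]
    rw [← Finset.sum_boole]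
    calc ∑ T ∈ F, (if (∀ v ∈ Finset.Icc 1 r, ¬ HasIStrip lam (n - r) T v) then (1 : ℤ) else 0)
        = ∑ T ∈ F, ∑ Sf ∈ (Finset.Icc 1 r).powerset, (-1 : ℤ) ^ Sf.card *
            (if (∀ v ∈ Sf, HasIStrip lam (n - r) T v) then (1 : ℤ) else 0) :=
          Finset.sum_congr rfl (fun T _ => (e0 T).trans (e1 T))
      _ = ∑ Sf ∈ (Finset.Icc 1 r).powerset, ∑ T ∈ F, (-1 : ℤ) ^ Sf.card *
            (if (∀ v ∈ Sf, HasIStrip lam (n - r) T v) then (1 : ℤ) else 0) := Finset.sum_comm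
      _ = ∑ Sf ∈ (Finset.Icc 1 r).powerset, (-1 : ℤ) ^ Sf.card *
            ((F.filter (fun T => ∀ v ∈ Sf, HasIStrip lam (n - r) T v)).card : ℤ) := by
          apply Finset.sum_congr rfl
          intro Sf _
          rw [← Finset.mul_sum, Finset.sum_boole]
  rw [hIE, Finset.sum_congr rfl (fun Sf hSf => by
    rw [hcount Sf (Finset.mem_powerset.1 hSf)])]
  have hkey := Finset.sum_powerset_apply_card
    (f := fun j => (-1 : ℤ) ^ j *
      (if j ≤ m then ((ssytCount (r - j) (shiftPart lam j) : ℕ) : ℤ) else 0))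
    (x := Finset.Icc 1 r)
  have hcard : (Finset.Icc 1 r).card = r := by
    rw [Nat.card_Icc]
    omega
  rw [hcard] at hkey
  rw [hkey]
  have hmr : m ≤ r := m_le_r hm
  rw [← Finset.sum_subset (Finset.range_subset_range.2 (by omega : m + 1 ≤ r + 1)) (by
    intro j hj hj'
    rw [mem_range] at hj hj'
    have : ¬ j ≤ m := by omega
    rw [if_neg this, mul_zero, smul_zero])]
  apply Finset.sum_congr rfl
  intro j hj
  rw [mem_range] at hj
  rw [if_pos (by omega : j ≤ m), nsmul_eq_mul]
  push_cast
  ring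

end StripAux

end StripAuxSection

/-- The number of SSYTs of shape `lam ⊆ (n-r)^r` with entries in `{1,…,r}` containing no
`(i)`-strip for any `i` equals `∑_{j=0}^{m} (-1)^j C(r,j) |SSYT_{r-j}(lam^j)|`, where `m`
is the number of parts of `lam` equal to `n-r` and `lam^j` removes `j` such parts. -/
theorem stmt2 (n r : ℕ) (hrn : r < n) (lam : ℕ → ℕ) (hp : IsPartition r lam)
    (hsub : ∀ i, lam i ≤ n - r)
    (m : ℕ) (hm : m = ((Finset.range r).filter (fun i => lam i = n - r)).card) :
    ({T : ℕ → ℕ → ℕ | IsSSYT lam r T ∧ ZeroOutside lam T ∧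
        ∀ v, 1 ≤ v → v ≤ r → ¬ HasIStrip lam (n - r) T v}.ncard : ℤ)
      = ∑ j ∈ Finset.range (m + 1),
          (-1 : ℤ) ^ j * (r.choose j : ℤ) * (ssytCount (r - j) (shiftPart lam j) : ℤ) := by
  exact StripAux.stmt2_aux n r hrn lam hp hsub m hm
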